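/- (Baker's sixth-order identity) In any Lie algebra, for elements a and b: [a,[b,[b,[b,[b,a]]]]] - 2[b,[a,[b,[b,[b,a]]]]] + [b,[b,[a,[b,[b,a]]]]] = 0. (In the nested bracket word notation: [ab⁴a] - 2[bab³a] + [b²ab²a] = 0.) -/
import Mathlib


/-- Baker's sixth-order identity
`[ab⁴a] - 2[bab³a] + [b²ab²a] = 0`. -/
theorem baker_sixth_order {L : Type*} [LieRing L] [LieAlgebra ℝ L] (a b : L) :
    ⁅a, ⁅b, ⁅b, ⁅b, ⁅b, a⁆⁆⁆⁆⁆ - (2 : ℤ) • ⁅b, ⁅a, ⁅b, ⁅b, ⁅b, a⁆⁆⁆⁆⁆ +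
      ⁅b, ⁅b, ⁅a, ⁅b, ⁅b, a⁆⁆⁆⁆⁆ = 0 := by
  have k : ∀ x : L, ⁅a, ⁅b, x⁆⁆ = ⁅⁅a,b⁆, x⁆ + ⁅b, ⁅a, x⁆⁆ := fun x => leibniz_lie a b x
  have k2 : ∀ x : L, ⁅⁅a,b⁆, ⁅b, x⁆⁆ = ⁅⁅⁅a,b⁆,b⁆, x⁆ + ⁅b, ⁅⁅a,b⁆, x⁆⁆ :=
    fun x => leibniz_lie ⁅a,b⁆ b x
  have hc : ⁅⁅a,b⁆,b⁆ = ⁅b,⁅b,a⁆⁆ := by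
    rw [← lie_skew b a, lie_neg, ← lie_skew b ⁅a,b⁆, neg_neg]
  simp only [k, k2, hc, lie_add, lie_self, lie_zero, add_zero, smul_add, two_smul]
  abel
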